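/- arXiv:1711.03886 — 4 statements merged into one kernel-verified Lean document; each statement's English description precedes it below -/
import Mathlib

section
/- Let n, k, k' be natural numbers with k ≤ k', let B be a predicate on finite subsets of Fin n, and let H be a finite family of functions from Fin n to Fin k' such that for every finite set S ⊆ Fin n with |S| ≤ k' there exists h ∈ H that is injective on S. Then the following are equivalent: (i) there exists a finite set S ⊆ Fin n with |S| ≤ k such that B(S) holds; (ii) there exists a finite set S ⊆ Fin n with |S| ≤ k' such that for every h ∈ H there exists a finite set T ⊆ Fin k' with |T| ≤ k and B(S ∩ h⁻¹(T)). -/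
/-- Let `k ≤ k'` and let `H` be a family of functions `Fin n → Fin k'`
such that every set of size at most `k'` is mapped injectively by some `h ∈ H`.
Then `B` has a satisfying set of size at most `k` iff there is a set `S` of size
at most `k'` such that for every `h ∈ H` some `T ⊆ Fin k'` with `|T| ≤ k`
satisfies `B (S ∩ h⁻¹(T))`, where `S ∩ h⁻¹(T)` is `S.filter (fun i => h i ∈ T)`. -/
theorem stmt_5 (n k k' : ℕ) (hkk' : k ≤ k') (B : Finset (Fin n) → Prop)
    (H : Finset (Fin n → Fin k'))
    (hperfect : ∀ S : Finset (Fin n), S.card ≤ k' →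
      ∃ h ∈ H, Set.InjOn h (S : Set (Fin n))) :
    (∃ S : Finset (Fin n), S.card ≤ k ∧ B S) ↔
    (∃ S : Finset (Fin n), S.card ≤ k' ∧
      ∀ h ∈ H, ∃ T : Finset (Fin k'), T.card ≤ k ∧
        B (S.filter (fun i => h i ∈ T))) := by
  constructor
  · rintro ⟨S, hS, hB⟩
    refine ⟨S, hS.trans hkk', fun h _ => ⟨S.image h, ?_, ?_⟩⟩
    · exact (Finset.card_image_le).trans hS
    · have : S.filter (fun i => h i ∈ S.image h) = S := by
        apply Finset.filter_true_of_mem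
        intro i hi; exact Finset.mem_image_of_mem h hi
      rwa [this]
  · rintro ⟨S, hS, hh⟩
    obtain ⟨h, hH, hinj⟩ := hperfect S hS
    obtain ⟨T, hT, hB⟩ := hh h hH
    refine ⟨S.filter (fun i => h i ∈ T), ?_, hB⟩
    calc (S.filter (fun i => h i ∈ T)).card ≤ T.card := by
          apply Finset.card_le_card_of_injOn h
          · intro i hi; exact (Finset.mem_filter.mp hi).2
          · intro a ha b hb
            exact hinj (Finset.mem_coe.mpr (Finset.mem_filter.mp ha).1)
              (Finset.mem_coe.mpr (Finset.mem_filter.mp hb).1)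
      _ ≤ k := hT
end

section
/- Let F be a field, let k ≤ D be positive integers, let α : Fin D → F be injective with α(i) ≠ 0 for every i, and define RS : (Fin k → F) → (Fin D → F) by RS(m)(i) = Σ_{j : Fin k} (α i)^{j+1} · m(j). Let G be a simple graph on the vertex set Fin k → F, and suppose v : Fin k → (Fin k → F) satisfies G.Adj (v a) (v b) for all a ≠ b (a k-clique in G). Define T = {(j, g_j) : j ∈ Fin D} ⊆ (Fin D) × (Fin k → F), where g_j : Fin k → F is given by g_j(i) = RS(v i)(j). Then |T| = D, T is a feasible solution of the associated Threshold Set instance; that is: for every j : Fin D, |T ∩ S_j| ≤ 1, and for every subset X ⊆ Fin D with |X| = k, all a, b : Fin k with a < b, and all u, w : Fin k → F with ¬G.Adj(u, w), we have |T ∩ S_{X,a,b,u,w}| ≤ k − 1. -/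
open Polynomial in
lemma rs_inj_aux {F : Type*} [Field F] [DecidableEq F] {k D : ℕ}
    (α : Fin D → F) (hα_inj : Function.Injective α) (hα_ne : ∀ i, α i ≠ 0)
    (m m' : Fin k → F) (J : Finset (Fin D)) (hcard : k ≤ J.card)
    (h : ∀ j ∈ J, ∑ i : Fin k, (α j) ^ ((i : ℕ) + 1) * m i
        = ∑ i : Fin k, (α j) ^ ((i : ℕ) + 1) * m' i) : m = m' := by
  set p : F[X] := ∑ i : Fin k, Polynomial.C (m i - m' i) * Polynomial.X ^ ((i : ℕ) + 1)
    with hp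
  have hdeg : p.natDegree ≤ k := by
    apply Polynomial.natDegree_sum_le_of_forall_le
    intro i _
    exact (Polynomial.natDegree_C_mul_X_pow_le _ _).trans i.2
  have heval : ∀ x, p.eval x = ∑ i : Fin k, (m i - m' i) * x ^ ((i : ℕ) + 1) := by
    intro x; simp [hp, Polynomial.eval_finset_sum]
  have hzero : p = 0 := by
    apply Polynomial.eq_zero_of_natDegree_lt_card_of_eval_eq_zero' p
      (insert (0 : F) (J.image α))
    · intro x hx
      rcases Finset.mem_insert.mp hx with rfl | hx
      · rw [heval]
        refine Finset.sum_eq_zero fun i _ => by simp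
      · obtain ⟨j, hj, rfl⟩ := Finset.mem_image.mp hx
        rw [heval]
        have := h j hj
        have : ∑ i : Fin k, (α j) ^ ((i : ℕ) + 1) * (m i - m' i) = 0 := by
          simp only [mul_sub, Finset.sum_sub_distrib, this, sub_self]
        rw [← this]
        exact Finset.sum_congr rfl fun i _ => by ring
    · have h0 : (0 : F) ∉ J.image α := by
        simp only [Finset.mem_image, not_exists]
        rintro j ⟨hj, hj0⟩
        exact hα_ne j hj0
      rw [Finset.card_insert_of_notMem h0, Finset.card_image_of_injective _ hα_inj]
      omega
  funext i
  have hc : p.coeff ((i : ℕ) + 1) = m i - m' i := by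
    rw [hp, Polynomial.finset_sum_coeff]
    have : ∀ i' : Fin k,
        (Polynomial.C (m i' - m' i') * Polynomial.X ^ ((i' : ℕ) + 1)).coeff ((i : ℕ) + 1)
        = if i' = i then m i - m' i else 0 := by
      intro i'
      rw [Polynomial.coeff_C_mul, Polynomial.coeff_X_pow]
      by_cases hii : i' = i
      · subst hii; simp
      · have : (i' : ℕ) + 1 ≠ (i : ℕ) + 1 := by
          simp only [ne_eq, Nat.add_right_cancel_iff]
          exact fun hh => hii (Fin.ext hh)
        rw [if_neg (Ne.symm this), mul_zero, if_neg hii]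
    rw [Finset.sum_congr rfl fun i' _ => this i', Finset.sum_ite_eq' _ i]
    simp
  rw [hzero] at hc
  simp at hc
  exact sub_eq_zero.mp hc.symm

/-- Given a `k`-clique `v` in a graph `G` on the vertex set `Fin k → F`,
the set `T = {(j, g_j) : j : Fin D}` with `g_j i = RS (v i) j` has cardinality `D`
and is a feasible solution of the associated Threshold Set instance: it meets each
set `S_j = {(j, g)}` (of weight 1) in at most one element, and each set
`S_{X,a,b,u,w} = {(j, g) : j ∈ X, g a = RS u j, g b = RS w j}` (of weight `k - 1`,
for `|X| = k`, `a < b`, and nonadjacent `u, w`) in at most `k - 1` elements. -/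
theorem stmt_7 (F : Type*) [Field F] [DecidableEq F] (k D : ℕ) (hk : 0 < k) (hkD : k ≤ D)
    (α : Fin D → F) (hα_inj : Function.Injective α) (hα_ne : ∀ i, α i ≠ 0)
    (RS : (Fin k → F) → (Fin D → F))
    (hRS : ∀ m i, RS m i = ∑ j : Fin k, (α i) ^ ((j : ℕ) + 1) * m j)
    (G : SimpleGraph (Fin k → F)) [DecidableRel G.Adj]
    (v : Fin k → (Fin k → F)) (hv : ∀ a b, a ≠ b → G.Adj (v a) (v b))
    (T : Finset (Fin D × (Fin k → F)))
    (hT : T = Finset.image (fun j : Fin D => (j, fun i : Fin k => RS (v i) j))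
      Finset.univ) :
    T.card = D ∧
    (∀ j : Fin D, (T.filter (fun p => p.1 = j)).card ≤ 1) ∧
    (∀ X : Finset (Fin D), X.card = k → ∀ a b : Fin k, a < b →
      ∀ u w : Fin k → F, ¬ G.Adj u w →
        (T.filter (fun p => p.1 ∈ X ∧ p.2 a = RS u p.1 ∧ p.2 b = RS w p.1)).card
          ≤ k - 1) := by
  have hinj : Function.Injective (fun j : Fin D => (j, fun i : Fin k => RS (v i) j)) := by
    intro x y hxy
    exact congrArg Prod.fst hxy
  have hmemT : ∀ p ∈ T, p = (p.1, fun i : Fin k => RS (v i) p.1) := by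
    intro p hp
    rw [hT] at hp
    obtain ⟨j, _, rfl⟩ := Finset.mem_image.mp hp
    rfl
  refine ⟨?_, ?_, ?_⟩
  · rw [hT, Finset.card_image_of_injective _ hinj, Finset.card_univ, Fintype.card_fin]
  · intro j
    apply Finset.card_le_one.mpr
    intro p hp q hq
    simp only [Finset.mem_filter] at hp hq
    rw [hmemT p hp.1, hmemT q hq.1, hp.2, hq.2]
  · intro X hX a b hab u w hnadj
    by_contra hc
    push_neg at hc
    set Y := T.filter (fun p => p.1 ∈ X ∧ p.2 a = RS u p.1 ∧ p.2 b = RS w p.1) with hY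
    have hYk : k ≤ Y.card := by omega
    set J := Y.image Prod.fst with hJ
    have hJcard : J.card = Y.card := by
      apply Finset.card_image_of_injOn
      intro p hp q hq hpq
      rw [hmemT p (Finset.mem_filter.mp hp).1, hmemT q (Finset.mem_filter.mp hq).1, hpq]
    have hJprop : ∀ j ∈ J, RS (v a) j = RS u j ∧ RS (v b) j = RS w j := by
      intro j hj
      obtain ⟨p, hp, rfl⟩ := Finset.mem_image.mp hj
      obtain ⟨hpT, _, h1, h2⟩ := Finset.mem_filter.mp hp
      have := hmemT p hpT
      rw [this] at h1 h2
      exact ⟨h1, h2⟩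
    have hua : v a = u := by
      apply rs_inj_aux α hα_inj hα_ne _ _ J (by omega)
      intro j hj
      rw [← hRS, ← hRS]
      exact (hJprop j hj).1
    have hwb : v b = w := by
      apply rs_inj_aux α hα_inj hα_ne _ _ J (by omega)
      intro j hj
      rw [← hRS, ← hRS]
      exact (hJprop j hj).2
    exact hnadj (hua ▸ hwb ▸ hv a b (ne_of_lt hab))
end

section
/- Let F be a field, let k ≤ D be positive integers with k ≥ 2, let α : Fin D → F be injective with α(i) ≠ 0 for every i, and define RS : (Fin k → F) → (Fin D → F) by RS(m)(i) = Σ_{j : Fin k} (α i)^{j+1} · m(j). Let G be a simple graph on the vertex set Fin k → F. Suppose T is a finite subset of (Fin D) × (Fin k → F) that is a feasible solution of the associated Threshold Set instance (i.e., |T ∩ S_j| ≤ 1 for every j : Fin D, and |T ∩ S_{X,a,b,u,w}| ≤ k − 1 for every tuple (X, a, b, u, w) with X ⊆ Fin D, |X| = k, a < b in Fin k, and ¬G.Adj(u, w)), and suppose |T| ≥ k. Then G contains a k-clique: there exists v : Fin k → (Fin k → F) such that G.Adj (v a) (v b) for all a ≠ b. -/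
/-- If `k ≥ 2` and `T` is a feasible solution of the Threshold Set
instance associated with a graph `G` on the vertex set `Fin k → F` (i.e. `T` meets
each set `S_j = {(j, g)}` in at most one element, and each set
`S_{X,a,b,u,w} = {(j, g) : j ∈ X, g a = RS u j, g b = RS w j}` with `|X| = k`,
`a < b`, and `u, w` nonadjacent, in at most `k - 1` elements) with `|T| ≥ k`,
then `G` contains a `k`-clique. -/
theorem stmt_8 (F : Type*) [Field F] [DecidableEq F] (k D : ℕ) (hk : 2 ≤ k) (hkD : k ≤ D)
    (α : Fin D → F) (hα_inj : Function.Injective α) (hα_ne : ∀ i, α i ≠ 0)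
    (RS : (Fin k → F) → (Fin D → F))
    (hRS : ∀ m i, RS m i = ∑ j : Fin k, (α i) ^ ((j : ℕ) + 1) * m j)
    (G : SimpleGraph (Fin k → F)) [DecidableRel G.Adj]
    (T : Finset (Fin D × (Fin k → F)))
    (hT1 : ∀ j : Fin D, (T.filter (fun p => p.1 = j)).card ≤ 1)
    (hT2 : ∀ X : Finset (Fin D), X.card = k → ∀ a b : Fin k, a < b →
      ∀ u w : Fin k → F, ¬ G.Adj u w →
        (T.filter (fun p => p.1 ∈ X ∧ p.2 a = RS u p.1 ∧ p.2 b = RS w p.1)).card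
          ≤ k - 1)
    (hTcard : k ≤ T.card) :
    ∃ v : Fin k → (Fin k → F), ∀ a b, a ≠ b → G.Adj (v a) (v b) := by
  classical
  -- first projection is injective on T
  have hfst : Set.InjOn Prod.fst (T : Set (Fin D × (Fin k → F))) := by
    intro p hp q hq h
    by_contra hne
    have hsub : ({p, q} : Finset (Fin D × (Fin k → F))) ⊆
        T.filter (fun r => r.1 = p.1) := by
      intro r hr
      simp only [Finset.mem_insert, Finset.mem_singleton] at hr
      rcases hr with rfl | rfl
      · exact Finset.mem_filter.mpr ⟨hp, rfl⟩
      · exact Finset.mem_filter.mpr ⟨hq, h.symm⟩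
    have h2 : ({p, q} : Finset (Fin D × (Fin k → F))).card = 2 :=
      Finset.card_pair hne
    have := (Finset.card_le_card hsub).trans (hT1 p.1)
    omega
  have himg : k ≤ (T.image Prod.fst).card := by
    rw [Finset.card_image_of_injOn hfst]; exact hTcard
  obtain ⟨X, hXsub, hX⟩ := Finset.exists_subset_card_eq himg
  set e := X.orderIsoOfFin hX with he
  set β : Fin k → F := fun i => α (e i) with hβ
  have hβinj : Function.Injective β := by
    intro i j h
    exact e.injective (Subtype.val_injective (hα_inj h))
  set V : Matrix (Fin k) (Fin k) F := Matrix.of fun i j => β i ^ ((j : ℕ) + 1) with hV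
  have hVeq : V = Matrix.diagonal β * Matrix.vandermonde β := by
    ext i j
    simp [hV, Matrix.mul_apply, Matrix.diagonal_apply, Matrix.vandermonde,
      Finset.sum_ite_eq, pow_succ, mul_comm]
  have hdet : V.det ≠ 0 := by
    rw [hVeq, Matrix.det_mul, Matrix.det_diagonal, Matrix.det_vandermonde]
    refine mul_ne_zero (Finset.prod_ne_zero_iff.mpr fun i _ => hα_ne _) ?_
    refine Finset.prod_ne_zero_iff.mpr fun i _ => Finset.prod_ne_zero_iff.mpr
      fun j hj => sub_ne_zero.mpr fun h => ?_
    have : i = j := hβinj h.symm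
    simp [this] at hj
  have hpick : ∀ i : Fin k, ∃ gg : Fin k → F, (((e i : Fin D)), gg) ∈ T := by
    intro i
    have hmem : (e i : Fin D) ∈ T.image Prod.fst := hXsub (e i).2
    obtain ⟨p, hp, hp2⟩ := Finset.mem_image.mp hmem
    exact ⟨p.2, by rwa [← hp2]⟩
  choose g hg using hpick
  set u : Fin k → (Fin k → F) := fun a => V⁻¹.mulVec (fun i => g i a) with hu
  have hVinv : ∀ x : Fin k → F, V.mulVec (V⁻¹.mulVec x) = x := by
    intro x
    rw [Matrix.mulVec_mulVec, Matrix.mul_nonsing_inv _ (isUnit_iff_ne_zero.mpr hdet),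
      Matrix.one_mulVec]
  have hRSkey : ∀ (a i : Fin k), RS (u a) (e i) = g i a := by
    intro a i
    have h1 := congrFun (hVinv (fun i => g i a)) i
    rw [hRS]
    rw [hu]
    rw [← h1]
    simp [Matrix.mulVec, dotProduct, hV, hβ]
  have key : ∀ a b : Fin k, a < b → ¬ G.Adj (u a) (u b) → False := by
    intro a b hlt hn
    have hle := hT2 X hX a b hlt (u a) (u b) hn
    have hmem : ∀ i : Fin k, ((e i : Fin D), g i) ∈
        T.filter (fun p => p.1 ∈ X ∧ p.2 a = RS (u a) p.1 ∧ p.2 b = RS (u b) p.1) := by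
      intro i
      exact Finset.mem_filter.mpr ⟨hg i, (e i).2, (hRSkey a i).symm, (hRSkey b i).symm⟩
    have hcard : k ≤ (T.filter
        (fun p => p.1 ∈ X ∧ p.2 a = RS (u a) p.1 ∧ p.2 b = RS (u b) p.1)).card := by
      have hinj : Set.InjOn (fun i : Fin k => ((e i : Fin D), g i))
          (Finset.univ : Finset (Fin k)) := by
        intro i _ j _ h
        exact e.injective (Subtype.val_injective (congrArg Prod.fst h))
      have := Finset.card_le_card_of_injOn (fun i : Fin k => ((e i : Fin D), g i))
        (fun i _ => hmem i) hinj
      simpa using this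
    omega
  refine ⟨u, ?_⟩
  intro a b hab
  by_contra hadj
  rcases hab.lt_or_gt with h | h
  · exact key a b h hadj
  · exact key b a h fun h2 => hadj h2.symm
end

section
/- Let F be a field, let k ≤ D be positive integers with k ≥ 2, let α : Fin D → F be injective with α(i) ≠ 0 for every i, and define RS : (Fin k → F) → (Fin D → F) by RS(m)(i) = Σ_{j : Fin k} (α i)^{j+1} · m(j). Let G be a simple graph on the vertex set Fin k → F. Then the following are equivalent: (i) G contains a k-clique, i.e., there exists v : Fin k → (Fin k → F) with G.Adj (v a) (v b) for all a ≠ b; (ii) the associated Threshold Set instance has a feasible solution T ⊆ (Fin D) × (Fin k → F) with |T| ≥ k. Moreover, if (i) holds, then there is a feasible solution of cardinality exactly D. -/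
open Polynomial Finset


/-- A finite set `T ⊆ Fin D × (Fin k → F)` is a feasible solution of the Threshold
Set instance associated with a Reed–Solomon encoding `RS` and a graph `G` on the
vertex set `Fin k → F`: `T` meets each set `S_j = {(j, g)}` (weight 1) in at most
one element, and each set `S_{X,a,b,u,w} = {(j, g) : j ∈ X, g a = RS u j, g b = RS w j}`
(weight `k - 1`, for `|X| = k`, `a < b`, `u, w` nonadjacent) in at most `k - 1`
elements. -/
def ThresholdFeasible (F : Type*) [Field F] [DecidableEq F] (k D : ℕ)
    (RS : (Fin k → F) → (Fin D → F)) (G : SimpleGraph (Fin k → F))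
    [DecidableRel G.Adj] (T : Finset (Fin D × (Fin k → F))) : Prop :=
  (∀ j : Fin D, (T.filter (fun p => p.1 = j)).card ≤ 1) ∧
  (∀ X : Finset (Fin D), X.card = k → ∀ a b : Fin k, a < b →
    ∀ u w : Fin k → F, ¬ G.Adj u w →
      (T.filter (fun p => p.1 ∈ X ∧ p.2 a = RS u p.1 ∧ p.2 b = RS w p.1)).card
        ≤ k - 1)

lemma vanishA {F : Type*} [Field F] [DecidableEq F] {k D : ℕ} (hk : 1 ≤ k) (α : Fin D → F)
    (hinj : Function.Injective α) (hne : ∀ i, α i ≠ 0) (X : Finset (Fin D))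
    (hX : X.card = k) (m : Fin k → F)
    (h : ∀ j ∈ X, ∑ i : Fin k, α j ^ ((i : ℕ) + 1) * m i = 0) : m = 0 := by
  set q : F[X] := ∑ i : Fin k, C (m i) * Polynomial.X ^ (i : ℕ) with hq
  have hdeg : q.natDegree < k := by
    have : q.natDegree ≤ k - 1 := by
      apply natDegree_sum_le_of_forall_le
      intro i _
      refine (natDegree_C_mul_le _ _).trans ?_
      rw [natDegree_X_pow]
      omega
    omega
  have heval : ∀ x ∈ X.image α, q.eval x = 0 := by
    intro x hx
    obtain ⟨j, hj, rfl⟩ := Finset.mem_image.mp hx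
    have h0 : α j * q.eval (α j) = 0 := by
      rw [← h j hj, hq]
      simp only [eval_finset_sum, eval_mul, eval_C, eval_pow, eval_X, Finset.mul_sum]
      apply Finset.sum_congr rfl
      intro i _
      ring
    rcases mul_eq_zero.mp h0 with h1 | h1
    · exact absurd h1 (hne j)
    · exact h1
  have hcard : (X.image α).card = k := by
    rw [Finset.card_image_of_injective _ hinj, hX]
  have hq0 : q = 0 :=
    eq_zero_of_natDegree_lt_card_of_eval_eq_zero' q (X.image α) heval (by omega)
  funext i
  have hc : q.coeff (i : ℕ) = m i := by
    rw [hq, finset_sum_coeff]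
    simp only [coeff_C_mul, coeff_X_pow]
    rw [Finset.sum_eq_single i]
    · simp
    · intro b _ hb
      have hne2 : (i : ℕ) ≠ (b : ℕ) := fun hh => hb (Fin.ext hh.symm)
      simp [if_neg hne2]
    · simp
  rw [hq0] at hc
  simpa using hc.symm

lemma interpB {F : Type*} [Field F] [DecidableEq F] {k D : ℕ} (hk : 1 ≤ k) (α : Fin D → F)
    (hinj : Function.Injective α) (hne : ∀ i, α i ≠ 0) (X : Finset (Fin D))
    (hX : X.card = k) (c : Fin D → F) :
    ∃ m : Fin k → F, ∀ j ∈ X, ∑ i : Fin k, α j ^ ((i : ℕ) + 1) * m i = c j := by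
  have hvs : Set.InjOn α X := hinj.injOn
  set q : F[X] := Lagrange.interpolate X α (fun j => c j / α j) with hq
  have hdeg : q.natDegree < k := by
    rcases eq_or_ne q 0 with h0 | h0
    · rw [h0]; simpa using Nat.lt_of_lt_of_le Nat.zero_lt_one hk
    · rw [← hX]
      exact (natDegree_lt_iff_degree_lt h0).mpr (Lagrange.degree_interpolate_lt _ hvs)
  refine ⟨fun i => q.coeff (i : ℕ), fun j hj => ?_⟩
  have hev : q.eval (α j) = c j / α j := Lagrange.eval_interpolate_at_node _ hvs hj
  have : ∑ i : Fin k, α j ^ ((i : ℕ) + 1) * q.coeff (i : ℕ)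
      = α j * q.eval (α j) := by
    rw [eval_eq_sum_range' hdeg, Finset.mul_sum,
      Fin.sum_univ_eq_sum_range (fun i => α j ^ (i + 1) * q.coeff i)]
    apply Finset.sum_congr rfl
    intro i _
    ring
  rw [this, hev, mul_div_cancel₀ _ (hne j)]

lemma forwardT (F : Type*) [Field F] [DecidableEq F] (k D : ℕ) (hk : 2 ≤ k) (hkD : k ≤ D)
    (α : Fin D → F) (hα_inj : Function.Injective α) (hα_ne : ∀ i, α i ≠ 0)
    (RS : (Fin k → F) → (Fin D → F))
    (hRS : ∀ m i, RS m i = ∑ j : Fin k, (α i) ^ ((j : ℕ) + 1) * m j)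
    (G : SimpleGraph (Fin k → F)) [DecidableRel G.Adj]
    (v : Fin k → (Fin k → F)) (hv : ∀ a b, a ≠ b → G.Adj (v a) (v b)) :
    ∃ T : Finset (Fin D × (Fin k → F)),
      ThresholdFeasible F k D RS G T ∧ T.card = D := by
  classical
  set g : Fin D → (Fin k → F) := fun j a => RS (v a) j with hg
  have hinjg : Function.Injective (fun j => (j, g j) : Fin D → Fin D × (Fin k → F)) :=
    fun x y h => congrArg Prod.fst h
  refine ⟨Finset.univ.image (fun j => (j, g j)), ⟨?_, ?_⟩, ?_⟩
  · -- weight-1 constraints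
    intro j
    apply Finset.card_le_one.mpr
    intro p hp q hq
    simp only [Finset.mem_filter, Finset.mem_image, Finset.mem_univ, true_and] at hp hq
    obtain ⟨⟨jp, hjp⟩, hp1⟩ := hp
    obtain ⟨⟨jq, hjq⟩, hq1⟩ := hq
    rw [← hjp] at hp1 ⊢
    rw [← hjq] at hq1 ⊢
    simp only at hp1 hq1
    rw [hp1, hq1]
  · -- threshold constraints
    intro X hX a b hab u w hnadj
    by_contra hcon
    push_neg at hcon
    set Fl := (Finset.univ.image (fun j => (j, g j))).filter
      (fun p => p.1 ∈ X ∧ p.2 a = RS u p.1 ∧ p.2 b = RS w p.1) with hFl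
    have hkFl : k ≤ Fl.card := by omega
    have hmemT : ∀ p ∈ Fl, p = (p.1, g p.1) := by
      intro p hp
      obtain ⟨jp, _, hjp⟩ := Finset.mem_image.mp (Finset.mem_filter.mp hp).1
      rw [← hjp]
    have hsub : Fl.image Prod.fst ⊆ X := by
      intro j hj
      obtain ⟨p, hp, rfl⟩ := Finset.mem_image.mp hj
      exact (Finset.mem_filter.mp hp).2.1
    have hcardim : (Fl.image Prod.fst).card = Fl.card := by
      apply Finset.card_image_of_injOn
      intro p hp q hq hpq
      rw [hmemT p hp, hmemT q hq, hpq]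
    have heq : Fl.image Prod.fst = X :=
      Finset.eq_of_subset_of_card_le hsub (by omega)
    have hall : ∀ j ∈ X, RS (v a) j = RS u j ∧ RS (v b) j = RS w j := by
      intro j hj
      rw [← heq] at hj
      obtain ⟨p, hp, hp1⟩ := Finset.mem_image.mp hj
      obtain ⟨_, _, ha', hb'⟩ := Finset.mem_filter.mp hp
      have hpe := hmemT p hp
      rw [hpe] at ha' hb'
      simp only at ha' hb'
      rw [hp1] at ha' hb'
      exact ⟨ha', hb'⟩
    have hua : v a = u := by
      have h0 := vanishA (by omega) α hα_inj hα_ne X hX (fun i => v a i - u i) ?_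
      · funext i
        have := congrFun h0 i
        simpa [sub_eq_zero] using this
      · intro j hj
        have h1 := (hall j hj).1
        rw [hRS, hRS] at h1
        simp only [mul_sub, Finset.sum_sub_distrib]
        rw [h1, sub_self]
    have hwb : v b = w := by
      have h0 := vanishA (by omega) α hα_inj hα_ne X hX (fun i => v b i - w i) ?_
      · funext i
        have := congrFun h0 i
        simpa [sub_eq_zero] using this
      · intro j hj
        have h1 := (hall j hj).2
        rw [hRS, hRS] at h1
        simp only [mul_sub, Finset.sum_sub_distrib]
        rw [h1, sub_self]
    exact hnadj (hua ▸ hwb ▸ hv a b (ne_of_lt hab))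
  · rw [Finset.card_image_of_injective _ hinjg]
    simp

/-- For `2 ≤ k ≤ D`, a graph `G` on the vertex set `Fin k → F` has a
`k`-clique iff the associated Threshold Set instance has a feasible solution of
cardinality at least `k`; moreover, if `G` has a `k`-clique then there is a
feasible solution of cardinality exactly `D`. -/
theorem stmt_9 (F : Type*) [Field F] [DecidableEq F] (k D : ℕ) (hk : 2 ≤ k) (hkD : k ≤ D)
    (α : Fin D → F) (hα_inj : Function.Injective α) (hα_ne : ∀ i, α i ≠ 0)
    (RS : (Fin k → F) → (Fin D → F))
    (hRS : ∀ m i, RS m i = ∑ j : Fin k, (α i) ^ ((j : ℕ) + 1) * m j)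
    (G : SimpleGraph (Fin k → F)) [DecidableRel G.Adj] :
    ((∃ v : Fin k → (Fin k → F), ∀ a b, a ≠ b → G.Adj (v a) (v b)) ↔
      (∃ T : Finset (Fin D × (Fin k → F)),
        ThresholdFeasible F k D RS G T ∧ k ≤ T.card)) ∧
    ((∃ v : Fin k → (Fin k → F), ∀ a b, a ≠ b → G.Adj (v a) (v b)) →
      ∃ T : Finset (Fin D × (Fin k → F)),
        ThresholdFeasible F k D RS G T ∧ T.card = D) := by
  classical
  have hfwd : (∃ v : Fin k → (Fin k → F), ∀ a b, a ≠ b → G.Adj (v a) (v b)) →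
      ∃ T : Finset (Fin D × (Fin k → F)),
        ThresholdFeasible F k D RS G T ∧ T.card = D := by
    rintro ⟨v, hv⟩
    exact forwardT F k D hk hkD α hα_inj hα_ne RS hRS G v hv
  refine ⟨⟨fun h => ?_, ?_⟩, hfwd⟩
  · obtain ⟨T, hT, hTc⟩ := hfwd h
    exact ⟨T, hT, by omega⟩
  · rintro ⟨T, ⟨h1, h2⟩, hTc⟩
    -- first coordinates are distinct
    have hinjOn : Set.InjOn Prod.fst (T : Set (Fin D × (Fin k → F))) := by
      intro p hp q hq hpq
      have hcard := h1 p.1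
      have hpm : p ∈ T.filter (fun r => r.1 = p.1) := Finset.mem_filter.mpr ⟨hp, rfl⟩
      have hqm : q ∈ T.filter (fun r => r.1 = p.1) := Finset.mem_filter.mpr ⟨hq, hpq.symm⟩
      exact Finset.card_le_one.mp hcard p hpm q hqm
    have hJcard : k ≤ (T.image Prod.fst).card := by
      rw [Finset.card_image_of_injOn hinjOn]; exact hTc
    obtain ⟨X, hXsub, hX⟩ := Finset.exists_subset_card_eq hJcard
    -- choose second coordinates
    have hgex : ∀ j ∈ X, ∃ y, (j, y) ∈ T := by
      intro j hj
      obtain ⟨p, hp, hp1⟩ := Finset.mem_image.mp (hXsub hj)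
      exact ⟨p.2, by rwa [← hp1, Prod.mk.eta]⟩
    set g : Fin D → (Fin k → F) := fun j =>
      if h : ∃ y, (j, y) ∈ T then h.choose else 0 with hgdef
    have hgmem : ∀ j ∈ X, (j, g j) ∈ T := by
      intro j hj
      have h := hgex j hj
      simp only [hgdef, dif_pos h]
      exact h.choose_spec
    -- interpolate
    have hvex : ∀ a : Fin k, ∃ m : Fin k → F, ∀ j ∈ X, RS m j = g j a := by
      intro a
      obtain ⟨m, hm⟩ := interpB (by omega) α hα_inj hα_ne X hX (fun j => g j a)
      exact ⟨m, fun j hj => by rw [hRS]; exact hm j hj⟩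
    choose v hvp using hvex
    refine ⟨v, fun a b hab => ?_⟩
    by_contra hnadj
    have key : ∀ (a' b' : Fin k), a' < b' → ¬ G.Adj (v a') (v b') → False := by
      intro a' b' hlt hn
      have h3 := h2 X hX a' b' hlt (v a') (v b') hn
      have hsub2 : X.image (fun j => (j, g j)) ⊆
          T.filter (fun p => p.1 ∈ X ∧ p.2 a' = RS (v a') p.1 ∧ p.2 b' = RS (v b') p.1) := by
        intro p hp
        obtain ⟨j, hj, rfl⟩ := Finset.mem_image.mp hp
        refine Finset.mem_filter.mpr ⟨hgmem j hj, hj, ?_, ?_⟩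
        · exact (hvp a' j hj).symm
        · exact (hvp b' j hj).symm
      have hc2 : (X.image (fun j => (j, g j))).card = k := by
        rw [Finset.card_image_of_injective _ (fun x y h => congrArg Prod.fst h), hX]
      have := Finset.card_le_card hsub2
      omega
    rcases lt_or_gt_of_ne hab with hlt | hgt
    · exact key a b hlt hnadj
    · exact key b a hgt (fun h => hnadj h.symm)
end
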